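/- Let K be a compact convex set and let pos-LAff(K) denote the strictly positive lower semicontinuous affine functions K → (0, ∞] together with 0, ordered pointwise. Then pos-LAff(K) satisfies axiom (O5): given a', a, b', b, c in pos-LAff(K) with a + b ≤ c, a' ≪ a, b' ≪ b, there exists x in pos-LAff(K) with a' + x ≤ c ≤ a + x and b' ≪ x. -/

import Mathlib

variable {E : Type*} [AddCommGroup E] [Module ℝ E] [TopologicalSpace E]

/-- Membership in `pos-LAff(K) = LAff(K)₊₊ ∪ {0}`: either a strictly positive
lower semicontinuous affine function `K → (0, ∞]`, or the zero function. -/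
def IsPosLAffOn (K : Set E) (f : E → EReal) : Prop :=
  (LowerSemicontinuousOn f K ∧
    (∀ x ∈ K, ∀ y ∈ K, ∀ t : ℝ, 0 ≤ t → t ≤ 1 →
      f (t • x + (1 - t) • y) = (t : EReal) * f x + ((1 - t : ℝ) : EReal) * f y) ∧
    ∀ x ∈ K, 0 < f x) ∨ (∀ x ∈ K, f x = 0)

/-- The sequential way-below relation in `pos-LAff(K)`, via its standard
characterization: `f ≪ g` iff `f = 0` or there are a continuous affine `h`
and `ε > 0` with `f + ε ≤ h ≤ g` on `K`. -/
def PosLAffWayBelow (K : Set E) (f g : E → EReal) : Prop :=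
  (∀ x ∈ K, f x = 0) ∨
    ∃ h : E → ℝ, ContinuousOn h K ∧
      (∀ x ∈ K, ∀ y ∈ K, ∀ t : ℝ, 0 ≤ t → t ≤ 1 →
        h (t • x + (1 - t) • y) = t * h x + (1 - t) * h y) ∧
      ∃ ε : ℝ, 0 < ε ∧ (∀ x ∈ K, f x + (ε : EReal) ≤ (h x : EReal)) ∧
        ∀ x ∈ K, (h x : EReal) ≤ g x

/-- Nonnegativity of elements of pos-LAff(K). -/
lemma IsPosLAffOn.nonneg {K : Set E} {f : E → EReal} (hf : IsPosLAffOn K f)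
    {p : E} (hp : p ∈ K) : 0 ≤ f p := by
  rcases hf with ⟨-, -, h⟩ | h
  · exact (h p hp).le
  · exact (h p hp).ge

/-- Restricted distributivity on `EReal`: multiplication by a nonnegative real
distributes over a sum whose first term is not `⊥` and whose second term is real. -/
lemma ereal_nonneg_distrib (t : ℝ) (ht : 0 ≤ t) (r : EReal) (hr : r ≠ ⊥) (y : ℝ) :
    (t : EReal) * (r + (y : EReal)) = (t : EReal) * r + ((t * y : ℝ) : EReal) := by
  induction r with
  | bot => exact absurd rfl hr
  | coe z =>
      rw [← EReal.coe_add, ← EReal.coe_mul, ← EReal.coe_mul, ← EReal.coe_add, mul_add]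
  | top =>
      rcases ht.eq_or_lt with h0 | h0
      · rw [← h0]; simp
      · have h1 : (⊤ : EReal) + (y : EReal) = ⊤ := by
          rw [add_comm]; exact EReal.add_top_of_ne_bot (EReal.coe_ne_bot y)
        rw [h1, EReal.coe_mul_top_of_pos h0, add_comm]
        exact (EReal.add_top_of_ne_bot (EReal.coe_ne_bot _)).symm

/-- `pos-LAff(K)` on a compact convex set satisfies axiom (O5):
if `a + b ≤ c`, `a' ≪ a` and `b' ≪ b`, then there is `x ∈ pos-LAff(K)` with
`a' + x ≤ c ≤ a + x` and `b' ≪ x`. -/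
theorem posLAff_O5 [IsTopologicalAddGroup E] [ContinuousSMul ℝ E]
    [T2Space E] [LocallyConvexSpace ℝ E]
    (K : Set E) (hKcpt : IsCompact K) (hKcvx : Convex ℝ K)
    (a' a b' b c : E → EReal)
    (ha' : IsPosLAffOn K a') (ha : IsPosLAffOn K a) (hb' : IsPosLAffOn K b')
    (hb : IsPosLAffOn K b) (hc : IsPosLAffOn K c)
    (habc : ∀ x ∈ K, a x + b x ≤ c x)
    (ha'a : PosLAffWayBelow K a' a) (hb'b : PosLAffWayBelow K b' b) :
    ∃ x : E → EReal, IsPosLAffOn K x ∧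
      (∀ p ∈ K, a' p + x p ≤ c p) ∧ (∀ p ∈ K, c p ≤ a p + x p) ∧
      PosLAffWayBelow K b' x := by
  -- basic consequences
  have hbc : ∀ p ∈ K, b p ≤ c p := fun p hp =>
    le_trans (le_add_of_nonneg_left (ha.nonneg hp)) (habc p hp)
  have hac : ∀ p ∈ K, a p ≤ c p := fun p hp =>
    le_trans (le_add_of_nonneg_right (hb.nonneg hp)) (habc p hp)
  rcases ha'a with ha'0 | ⟨h, hcont, haff, ε, hε, hle1, hle2⟩
  · -- Case a' = 0 on K : take x = c.
    refine ⟨c, hc, ?_, ?_, ?_⟩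
    · intro p hp; rw [ha'0 p hp, zero_add]
    · intro p hp; exact le_add_of_nonneg_left (ha.nonneg hp)
    · rcases hb'b with hb'0 | ⟨h', hcont', haff', ε', hε', H1, H2⟩
      · exact Or.inl hb'0
      · exact Or.inr ⟨h', hcont', haff', ε', hε', H1,
          fun p hp => le_trans (H2 p hp) (hbc p hp)⟩
  rcases hc with ⟨hclsc, hcaff, hcpos⟩ | hc0
  swap
  · -- degenerate case c = 0 on K: every point of K gives a contradiction.
    have key : ∀ p ∈ K, False := by
      intro p hp
      have h1 : (ε : EReal) ≤ (h p : EReal) := by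
        calc (ε : EReal) = 0 + (ε : EReal) := (zero_add _).symm
          _ ≤ a' p + (ε : EReal) := add_le_add_left (ha'.nonneg hp) _
          _ ≤ (h p : EReal) := hle1 p hp
      have h2 : (h p : EReal) ≤ 0 := by
        calc (h p : EReal) ≤ a p := hle2 p hp
          _ ≤ c p := hac p hp
          _ = 0 := hc0 p hp
      have : (ε : EReal) ≤ 0 := h1.trans h2
      exact absurd (by exact_mod_cast this) (not_le.2 hε)
    exact ⟨c, Or.inr hc0, fun p hp => (key p hp).elim, fun p hp => (key p hp).elim,
      Or.inl fun p hp => (key p hp).elim⟩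
  -- Main case: set g := h - ε/2 and x := c - g.
  set g : E → ℝ := fun p => h p - ε / 2 with hg
  set x : E → EReal := fun p => c p + ((-g p : ℝ) : EReal) with hx
  have hεpos : (0 : ℝ) < ε / 2 := by linarith
  -- a' ≤ g on K
  have ha'g : ∀ p ∈ K, a' p ≤ (g p : EReal) := by
    intro p hp
    have h1 : a' p + ((ε / 2 : ℝ) : EReal) + ((ε / 2 : ℝ) : EReal) ≤ (h p : EReal) := by
      rw [add_assoc, ← EReal.coe_add]
      have : ε / 2 + ε / 2 = ε := by ring
      rw [this]; exact hle1 p hp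
    have h2 : a' p + ((ε / 2 : ℝ) : EReal) ≤ (g p : EReal) := by
      have := add_le_add_left h1 ((-(ε / 2) : ℝ) : EReal)
      rwa [add_assoc, ← EReal.coe_add, add_neg_cancel, EReal.coe_zero, add_zero,
        ← EReal.coe_add] at this
    calc a' p ≤ a' p + ((ε / 2 : ℝ) : EReal) :=
          le_add_of_nonneg_right (by exact_mod_cast hεpos.le)
      _ ≤ (g p : EReal) := h2
  -- g + ε/2 ≤ a on K
  have hga : ∀ p ∈ K, ((g p + ε / 2 : ℝ) : EReal) ≤ a p := by
    intro p hp
    have : g p + ε / 2 = h p := by simp only [hg]; ring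
    rw [this]; exact hle2 p hp
  have hga' : ∀ p ∈ K, (g p : EReal) ≤ a p := fun p hp =>
    le_trans (by exact_mod_cast (by linarith : g p ≤ g p + ε / 2)) (hga p hp)
  -- x ≥ b + ε/2 on K
  have hxb : ∀ p ∈ K, b p + ((ε / 2 : ℝ) : EReal) ≤ x p := by
    intro p hp
    have h1 : ((g p + ε / 2 : ℝ) : EReal) + b p ≤ c p :=
      le_trans (add_le_add_left (hga p hp) _) (habc p hp)
    have h2 := add_le_add_left h1 ((-g p : ℝ) : EReal)
    calc b p + ((ε / 2 : ℝ) : EReal)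
        = ((g p + ε / 2 : ℝ) : EReal) + b p + ((-g p : ℝ) : EReal) := by
          rw [add_comm (((g p + ε / 2 : ℝ) : EReal)) (b p), add_assoc, ← EReal.coe_add]
          norm_num
      _ ≤ c p + ((-g p : ℝ) : EReal) := h2
      _ = x p := rfl
  -- x is strictly positive on K
  have hxpos : ∀ p ∈ K, 0 < x p := by
    intro p hp
    have : (0 : EReal) < ((ε / 2 : ℝ) : EReal) := by exact_mod_cast hεpos
    calc (0 : EReal) < ((ε / 2 : ℝ) : EReal) := this
      _ = 0 + ((ε / 2 : ℝ) : EReal) := (zero_add _).symm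
      _ ≤ b p + ((ε / 2 : ℝ) : EReal) := add_le_add_left (hb.nonneg hp) _
      _ ≤ x p := hxb p hp
  -- g is affine on K
  have hgaff : ∀ p ∈ K, ∀ q ∈ K, ∀ t : ℝ, 0 ≤ t → t ≤ 1 →
      g (t • p + (1 - t) • q) = t * g p + (1 - t) * g q := by
    intro p hp q hq t ht0 ht1
    simp only [hg]
    rw [haff p hp q hq t ht0 ht1]; ring
  refine ⟨x, Or.inl ⟨?_, ?_, hxpos⟩, ?_, ?_, ?_⟩
  · -- lower semicontinuity
    intro p hp
    have hc1 : LowerSemicontinuousWithinAt c K p := hclsc p hp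
    have hc2 : LowerSemicontinuousWithinAt (fun q => ((-g q : ℝ) : EReal)) K p := by
      apply ContinuousWithinAt.lowerSemicontinuousWithinAt
      have hgc : ContinuousOn g K := hcont.sub continuousOn_const
      have := (continuous_coe_real_ereal.comp_continuousOn hgc.neg) p hp
      exact this
    exact hc1.add' hc2 (EReal.continuousAt_add
      (Or.inr (EReal.coe_ne_bot _)) (Or.inr (EReal.coe_ne_top _)))
  · -- affineness
    intro p hp q hq t ht0 ht1
    have hcq : c q ≠ ⊥ := ne_bot_of_gt (hcpos q hq)
    have hcp : c p ≠ ⊥ := ne_bot_of_gt (hcpos p hp)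
    simp only [hx]
    rw [hcaff p hp q hq t ht0 ht1, hgaff p hp q hq t ht0 ht1,
      ereal_nonneg_distrib t ht0 (c p) hcp (-g p),
      ereal_nonneg_distrib (1 - t) (by linarith) (c q) hcq (-g q)]
    have : (-(t * g p + (1 - t) * g q) : ℝ) = t * (-g p) + (1 - t) * (-g q) := by ring
    rw [this, EReal.coe_add]
    abel
  · -- a' + x ≤ c
    intro p hp
    calc a' p + x p ≤ (g p : EReal) + x p := add_le_add_left (ha'g p hp) _
      _ = c p + ((g p : EReal) + ((-g p : ℝ) : EReal)) := by
          simp only [hx]; abel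
      _ = c p := by rw [← EReal.coe_add]; norm_num
  · -- c ≤ a + x
    intro p hp
    calc c p = c p + ((g p : EReal) + ((-g p : ℝ) : EReal)) := by
          rw [← EReal.coe_add]; norm_num
      _ = (g p : EReal) + x p := by
          simp only [hx]; abel
      _ ≤ a p + x p := add_le_add_left (hga' p hp) _
  · -- b' ≪ x
    rcases hb'b with hb'0 | ⟨h', hcont', haff', ε', hε', H1, H2⟩
    · exact Or.inl hb'0
    · refine Or.inr ⟨h', hcont', haff', ε', hε', H1, fun p hp => ?_⟩
      calc (h' p : EReal) ≤ b p := H2 p hp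
        _ ≤ b p + ((ε / 2 : ℝ) : EReal) :=
            le_add_of_nonneg_right (by exact_mod_cast hεpos.le)
        _ ≤ x p := hxb p hp
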